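/- For p ≥ 4, the diameter of the graph of the p-th Birkhoff polytope B_p is exactly 2: there exist non-adjacent vertices, and any two vertices are at graph distance at most 2. -/

import Mathlib

open Finset

/-- The `p`-th Birkhoff polytope: the set of `p × p` doubly stochastic matrices. -/
def birkhoffPolytope (p : ℕ) : Set (Matrix (Fin p) (Fin p) ℝ) :=
  {x | (∀ i j, 0 ≤ x i j) ∧ (∀ i, ∑ j, x i j = 1) ∧ (∀ j, ∑ i, x i j = 1)}

/-- Two vertices of a polytope `P` are adjacent iff they are distinct and the segment
joining them is a face (an extreme subset) of `P`, i.e. an edge. -/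
def AdjacentVertices {E : Type*} [AddCommGroup E] [Module ℝ E]
    (P : Set E) (x y : E) : Prop :=
  x ≠ y ∧ IsExtreme ℝ P (segment ℝ x y)

set_option linter.unusedSectionVars false

section GroupTheory
open Equiv Equiv.Perm List

variable {α : Type*} [DecidableEq α] [Fintype α]

/-- Walking lemma: if the π-walk from x to a avoids a before step m,
and all intermediate points are off the list, then g = π * formPerm l agrees. -/
lemma walk_lemma (π : Perm α) (l : List α) (a : α) (ha : a ∈ l)
    (hpair : ∀ b ∈ l, ∀ c ∈ l, π.SameCycle b c → b = c) :
    ∀ (m : ℕ) (x : α), π.SameCycle x a → (π ^ m) x = a → (∀ j < m, (π ^ j) x ≠ a) →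
      ((π * l.formPerm) ^ m) x = a := by
  intro m
  induction m with
  | zero => intro x _ h _; simpa using h
  | succ m ih =>
    intro x hsc hm hj
    have hxnot : x ∉ l := by
      intro hxl
      have : x = a := hpair x hxl a ha hsc
      exact hj 0 (Nat.succ_pos m) (by simpa using this)
    have hstep : (π * l.formPerm) x = π x := by
      rw [Perm.mul_apply, List.formPerm_apply_of_notMem hxnot]
    have hsc' : π.SameCycle (π x) a := (Perm.sameCycle_apply_left).mpr hsc
    have hm' : (π ^ m) (π x) = a := by
      rw [← Perm.mul_apply, ← pow_succ]; exact hm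
    have hj' : ∀ j < m, (π ^ j) (π x) ≠ a := by
      intro j hjm
      rw [← Perm.mul_apply, ← pow_succ]
      exact hj (j + 1) (by omega)
    have := ih (π x) hsc' hm' hj'
    calc ((π * l.formPerm) ^ (m+1)) x = ((π * l.formPerm) ^ m) ((π * l.formPerm) x) := by
          rw [← Perm.mul_apply, pow_succ]
      _ = a := by rw [hstep]; exact this

lemma sameCycle_merge (π : Perm α) (l : List α) (a : α) (ha : a ∈ l)
    (hpair : ∀ b ∈ l, ∀ c ∈ l, π.SameCycle b c → b = c) (x : α)
    (hsc : π.SameCycle x a) : (π * l.formPerm).SameCycle x a := by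
  obtain ⟨i, _, hi⟩ := hsc.exists_pow_eq'
  have hex : ∃ m : ℕ, (π ^ m) x = a := ⟨i, hi⟩
  classical
  let m := Nat.find hex
  have hm : (π ^ m) x = a := Nat.find_spec hex
  have hj : ∀ j < m, (π ^ j) x ≠ a := fun j hj => Nat.find_min hex hj
  have := walk_lemma π l a ha hpair m x hsc hm hj
  exact ⟨(m : ℤ), by simpa [zpow_natCast] using this⟩

/-- If l is a nodup list of representatives of the distinct cycles of π, one from each,
with at least 2 elements, then π * formPerm l is a cycle. -/
lemma isCycle_mul_formPerm (π : Perm α) (l : List α) (hl : l.Nodup) (h2 : 2 ≤ l.length)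
    (hsupp : ∀ b ∈ l, π b ≠ b)
    (hpair : ∀ b ∈ l, ∀ c ∈ l, π.SameCycle b c → b = c)
    (hcov : ∀ x, π x ≠ x → ∃ b ∈ l, π.SameCycle x b) :
    IsCycle (π * l.formPerm) := by
  classical
  set g := π * l.formPerm with hg
  -- elements of l are pairwise same-cycle for g
  have hlink : ∀ b ∈ l, g.SameCycle b (l.formPerm b) := by
    intro b hb
    have hfb : l.formPerm b ∈ l := List.formPerm_apply_mem_of_mem hb
    have h1 : g b = π (l.formPerm b) := by simp [hg, Perm.mul_apply]
    have h2' : π.SameCycle (π (l.formPerm b)) (l.formPerm b) :=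
      (Perm.sameCycle_apply_left).mpr (Perm.SameCycle.refl _ _)
    have h3 : g.SameCycle (g b) (l.formPerm b) := by
      rw [h1]; exact sameCycle_merge π l (l.formPerm b) hfb hpair _ h2'
    exact (Perm.SameCycle.refl g b).apply_right.trans h3
  have hpowmem : ∀ (n : ℕ) (b), b ∈ l → (l.formPerm ^ n) b ∈ l := by
    intro n
    induction n with
    | zero => intro b hb; simpa using hb
    | succ n ih =>
      intro b hb
      rw [pow_succ, Perm.mul_apply]
      exact ih _ (List.formPerm_apply_mem_of_mem hb)
  have hltrans : ∀ b ∈ l, ∀ c ∈ l, g.SameCycle b c := by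
    have key : ∀ (n : ℕ), ∀ b ∈ l, g.SameCycle b ((l.formPerm ^ n) b) := by
      intro n
      induction n with
      | zero => intro b hb; simpa using Perm.SameCycle.refl g b
      | succ n ih =>
        intro b hb
        have h1 := ih b hb
        have h2 := hlink _ (hpowmem n b hb)
        rw [pow_succ', Perm.mul_apply]
        exact h1.trans h2
    intro b hb c hc
    have hcyc : IsCycle l.formPerm := List.isCycle_formPerm hl h2
    have hb' : l.formPerm b ≠ b := (List.formPerm_apply_mem_ne_self_iff _ hl _ hb).mpr h2
    have hc' : l.formPerm c ≠ c := (List.formPerm_apply_mem_ne_self_iff _ hl _ hc).mpr h2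
    obtain ⟨n, hn⟩ := hcyc.exists_pow_eq hb' hc'
    rw [← hn]
    exact key n b hb
  -- any element of l is moved by g
  have hgl : ∀ b ∈ l, g b ≠ b := by
    intro b hb hgb
    have hfb : l.formPerm b ∈ l := List.formPerm_apply_mem_of_mem hb
    have : π.SameCycle (l.formPerm b) b := by
      refine Perm.SameCycle.trans ?_ (show π.SameCycle (π (l.formPerm b)) b by
        rw [show π (l.formPerm b) = b from hgb])
      exact (Perm.SameCycle.refl _ _).apply_right
    have := hpair _ hfb _ hb this
    exact (List.formPerm_apply_mem_ne_self_iff _ hl _ hb).mpr h2 this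
  obtain ⟨b₀, hb₀⟩ : ∃ b₀, b₀ ∈ l := by
    cases l with
    | nil => simp at h2
    | cons x xs => exact ⟨x, List.mem_cons_self⟩
  refine ⟨b₀, hgl b₀ hb₀, ?_⟩
  intro y hy
  have hπy : π y ≠ y := by
    intro hπ
    by_cases hyl : y ∈ l
    · exact hsupp y hyl hπ
    · exact hy (by simp [hg, Perm.mul_apply, List.formPerm_apply_of_notMem hyl, hπ])
  obtain ⟨b, hb, hsc⟩ := hcov y hπy
  exact (hltrans b₀ hb₀ b hb).trans (sameCycle_merge π l b hb hpair y hsc).symm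

/-- Any non-identity non-cycle permutation of a finite linearly ordered type
is a product of two cycles. -/
lemma exists_two_cycles {α : Type*} [Fintype α] [LinearOrder α] (π : Equiv.Perm α)
    (hπ1 : π ≠ 1) (hπc : ¬ IsCycle π) :
    ∃ γ β : Equiv.Perm α, IsCycle γ ∧ IsCycle β ∧ γ * β = π := by
  classical
  -- representative function: minimum of the support of the cycle of x
  set r : α → α := fun x =>
    if h : ((π.cycleOf x).support).Nonempty then ((π.cycleOf x).support).min' h else x with hr
  have hrx : ∀ x, π x ≠ x → π.SameCycle x (r x) ∧ π (r x) ≠ (r x) := by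
    intro x hx
    have hmem : x ∈ (π.cycleOf x).support := by
      rw [Equiv.Perm.mem_support_cycleOf_iff]
      exact ⟨Equiv.Perm.SameCycle.refl _ _, Equiv.Perm.mem_support.mpr hx⟩
    have hne : ((π.cycleOf x).support).Nonempty := ⟨x, hmem⟩
    have hrdef : r x = ((π.cycleOf x).support).min' hne := by rw [hr]; simp [hne]
    have hrmem : r x ∈ (π.cycleOf x).support := by rw [hrdef]; exact Finset.min'_mem _ _
    have hrsupp : r x ∈ π.support := Equiv.Perm.support_cycleOf_le π x hrmem
    rw [Equiv.Perm.mem_support_cycleOf_iff] at hrmem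
    exact ⟨hrmem.1, Equiv.Perm.mem_support.mp hrsupp⟩
  have hreq : ∀ x y, π x ≠ x → π y ≠ y → π.SameCycle x y → r x = r y := by
    intro x y hx hy hsc
    have heq : π.cycleOf x = π.cycleOf y := Equiv.Perm.SameCycle.cycleOf_eq hsc
    have hney : ((π.cycleOf y).support).Nonempty := ⟨y, by
      rw [Equiv.Perm.mem_support_cycleOf_iff]
      exact ⟨Equiv.Perm.SameCycle.refl _ _, Equiv.Perm.mem_support.mpr hy⟩⟩
    rw [hr]; simp only [heq, dif_pos hney]
  set T : Finset α := π.support.image r with hT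
  set l : List α := T.sort (· ≤ ·) with hlL
  have hlnd : l.Nodup := T.sort_nodup _
  have hmemT : ∀ b, b ∈ l ↔ b ∈ T := fun b => Finset.mem_sort _
  have hTsup : ∀ b ∈ l, π b ≠ b := by
    intro b hb
    rw [hmemT, hT, Finset.mem_image] at hb
    obtain ⟨x, hx, rfl⟩ := hb
    exact (hrx x (Equiv.Perm.mem_support.mp hx)).2
  have hTpair : ∀ b ∈ l, ∀ c ∈ l, π.SameCycle b c → b = c := by
    intro b hb c hc hsc
    rw [hmemT, hT, Finset.mem_image] at hb hc
    obtain ⟨x, hx, rfl⟩ := hb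
    obtain ⟨y, hy, rfl⟩ := hc
    rw [Equiv.Perm.mem_support] at hx hy
    have h1 := (hrx x hx).1
    have h2 := (hrx y hy).1
    exact hreq x y hx hy (h1.trans (hsc.trans h2.symm))
  have hTcov : ∀ x, π x ≠ x → ∃ b ∈ l, π.SameCycle x b := by
    intro x hx
    exact ⟨r x, (hmemT _).mpr (Finset.mem_image_of_mem r (Equiv.Perm.mem_support.mpr hx)),
      (hrx x hx).1⟩
  have hlen : 2 ≤ l.length := by
    by_contra hlt
    push_neg at hlt
    interval_cases h : l.length
    · obtain ⟨x, hx⟩ : ∃ x, π x ≠ x := by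
        by_contra hc; push_neg at hc; exact hπ1 (Equiv.ext fun x => hc x)
      obtain ⟨b, hb, _⟩ := hTcov x hx
      rw [List.length_eq_zero_iff] at h
      simp [h] at hb
    · obtain ⟨b, hb⟩ := List.length_eq_one_iff.mp h
      apply hπc
      obtain ⟨x, hx⟩ : ∃ x, π x ≠ x := by
        by_contra hc; push_neg at hc; exact hπ1 (Equiv.ext fun x => hc x)
      have hbl : b ∈ l := by simp [hb]
      refine ⟨b, hTsup b hbl, fun y hy => ?_⟩
      obtain ⟨c, hc, hsc⟩ := hTcov y hy
      rw [hb, List.mem_singleton] at hc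
      subst hc
      exact hsc.symm
  refine ⟨π * l.formPerm, l.formPerm⁻¹, isCycle_mul_formPerm π l hlnd hlen hTsup hTpair hTcov,
    (List.isCycle_formPerm hlnd hlen).inv, by group⟩

end GroupTheory

section Geometry
open Equiv Equiv.Perm

variable {p : ℕ}

lemma permMatrix_apply (σ : Perm (Fin p)) (i j : Fin p) :
    σ.permMatrix ℝ i j = if σ i = j then 1 else 0 := by
  simp [Equiv.Perm.permMatrix, PEquiv.toMatrix_apply, Equiv.toPEquiv]

lemma birkhoff_eq : birkhoffPolytope p = (doublyStochastic ℝ (Fin p) : Set _) := by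
  ext x
  rw [show x ∈ birkhoffPolytope p ↔ _ from Iff.rfl, SetLike.mem_coe, mem_doublyStochastic_iff_sum]
  rfl

lemma permMatrix_mem (σ : Perm (Fin p)) : σ.permMatrix ℝ ∈ birkhoffPolytope p := by
  rw [birkhoff_eq]; exact permMatrix_mem_doublyStochastic

lemma birkhoff_convex : Convex ℝ (birkhoffPolytope p) := by
  rw [birkhoff_eq]; exact convex_doublyStochastic

/-- zero-propagation along open segments -/
lemma zero_prop {a b x : Matrix (Fin p) (Fin p) ℝ} (ha : a ∈ birkhoffPolytope p)
    (hb : b ∈ birkhoffPolytope p) (hx : x ∈ openSegment ℝ a b) {i j : Fin p}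
    (hxij : x i j = 0) : a i j = 0 ∧ b i j = 0 := by
  obtain ⟨s, t, hs, ht, hst, rfl⟩ := hx
  have h : s * a i j + t * b i j = 0 := by simpa [Matrix.add_apply, Matrix.smul_apply] using hxij
  have h1 : 0 ≤ s * a i j := mul_nonneg hs.le (ha.1 i j)
  have h2 : 0 ≤ t * b i j := mul_nonneg ht.le (hb.1 i j)
  constructor
  · have : s * a i j = 0 := by linarith
    rcases mul_eq_zero.mp this with h | h
    · exact absurd h hs.ne'
    · exact h
  · have : t * b i j = 0 := by linarith
    rcases mul_eq_zero.mp this with h | h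
    · exact absurd h ht.ne'
    · exact h

lemma permMatrix_extremePoint (σ : Perm (Fin p)) :
    σ.permMatrix ℝ ∈ Set.extremePoints ℝ (birkhoffPolytope p) := by
  refine ⟨permMatrix_mem σ, fun a ha b hb hx => ?_⟩
  have key : ∀ w ∈ birkhoffPolytope p, (∀ i j, σ i ≠ j → w i j = 0) → w = σ.permMatrix ℝ := by
    intro w hw hz
    funext i j
    rcases eq_or_ne (σ i) j with h | h
    · subst h
      have hrow := hw.2.1 i
      have : ∑ k, w i k = w i (σ i) := by
        refine Finset.sum_eq_single _ ?_ (by simp)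
        intro k _ hk
        exact hz i k (fun h => hk h.symm)
      rw [this] at hrow
      rw [hrow, permMatrix_apply, if_pos rfl]
    · rw [hz i j h, permMatrix_apply, if_neg h]
  have hz : ∀ i j, σ i ≠ j → σ.permMatrix ℝ i j = 0 := by
    intro i j h; rw [permMatrix_apply, if_neg h]
  exact key a ha fun i j h => (zero_prop ha hb hx (hz i j h)).1

/-- Any doubly stochastic matrix supported on the union of the graphs of σ and τ,
where τ⁻¹ * σ is a cycle, lies on the segment between the two permutation matrices. -/
lemma mem_segment_of_support (σ τ : Perm (Fin p)) (hcyc : IsCycle (τ⁻¹ * σ))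
    (w : Matrix (Fin p) (Fin p) ℝ) (hw : w ∈ birkhoffPolytope p)
    (hsupp : ∀ i j, σ i ≠ j → τ i ≠ j → w i j = 0) :
    w ∈ segment ℝ (σ.permMatrix ℝ) (τ.permMatrix ℝ) := by
  classical
  set c : Perm (Fin p) := τ⁻¹ * σ with hc
  have hci : ∀ i, c i ≠ i ↔ σ i ≠ τ i := by
    intro i
    rw [hc, Perm.mul_apply, not_iff_not]
    constructor
    · intro h; have := congrArg τ h; simpa using this
    · intro h; rw [h]; exact τ.symm_apply_apply i
  set f : Fin p → ℝ := fun i => w i (σ i) with hf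
  -- row facts
  have hrow : ∀ i, ∑ j, w i j = 1 := hw.2.1
  have hcol : ∀ j, ∑ i, w i j = 1 := hw.2.2
  have hrow1 : ∀ i, σ i = τ i → w i (σ i) = 1 := by
    intro i hστ
    have : ∑ k, w i k = w i (σ i) := by
      refine Finset.sum_eq_single _ ?_ (by simp)
      intro k _ hk
      exact hsupp i k (fun h => hk h.symm) (fun h => hk (hστ ▸ h.symm))
    rw [← this]; exact hrow i
  have hrow2 : ∀ i, σ i ≠ τ i → w i (τ i) = 1 - f i := by
    intro i hστ
    have hsub : ({σ i, τ i} : Finset (Fin p)) ⊆ Finset.univ := Finset.subset_univ _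
    have hsum : ∑ j ∈ ({σ i, τ i} : Finset (Fin p)), w i j = ∑ j, w i j := by
      refine Finset.sum_subset hsub ?_
      intro j _ hj
      simp only [Finset.mem_insert, Finset.mem_singleton, not_or] at hj
      exact hsupp i j (fun h => hj.1 h.symm) (fun h => hj.2 h.symm)
    rw [Finset.sum_pair hστ, hrow i] at hsum
    simp only [hf]; linarith
  -- column fact: f (c i) = f i  on the support of c
  have hcolstep : ∀ i, c i ≠ i → f (c i) = f i := by
    intro i hi
    have hστ : σ i ≠ τ i := (hci i).mp hi
    have hτci : τ (c i) = σ i := by simp [hc, Perm.mul_apply]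
    have hcimoved : c (c i) ≠ c i := by
      intro h
      exact hi (c.injective h)
    have hστci : σ (c i) ≠ τ (c i) := (hci (c i)).mp hcimoved
    -- column at σ i has exactly two nonzero entries: rows i and c i
    have hne : i ≠ c i := fun h => hi h.symm
    have hsum : ∑ i' ∈ ({i, c i} : Finset (Fin p)), w i' (σ i) = ∑ i', w i' (σ i) := by
      refine Finset.sum_subset (Finset.subset_univ _) ?_
      intro i' _ hi'
      simp only [Finset.mem_insert, Finset.mem_singleton, not_or] at hi'
      refine hsupp i' (σ i) (fun h => hi'.1 (σ.injective h)) (fun h => hi'.2 ?_)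
      have : i' = τ⁻¹ (σ i) := by rw [← h]; simp
      simpa [hc, Perm.mul_apply] using this
    rw [Finset.sum_pair hne, hcol (σ i)] at hsum
    have h2 : w (c i) (σ i) = 1 - f (c i) := by
      rw [← hτci]; exact hrow2 (c i) hστci
    simp only [hf] at hsum ⊢
    linarith
  -- constancy along powers
  have hpow : ∀ (n : ℕ) (i : Fin p), c i ≠ i → f ((c ^ n) i) = f i := by
    intro n
    induction n with
    | zero => intro i _; simp
    | succ n ih =>
      intro i hi
      have h1 : (c ^ n) i ∈ c.support := by
        rw [Equiv.Perm.pow_apply_mem_support]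
        exact Equiv.Perm.mem_support.mpr hi
      rw [pow_succ', Perm.mul_apply]
      rw [hcolstep _ (Equiv.Perm.mem_support.mp h1)]
      exact ih i hi
  obtain ⟨x₀, hx₀, htr⟩ := hcyc
  set s₀ : ℝ := f x₀ with hs₀
  have hconst : ∀ i, c i ≠ i → f i = s₀ := by
    intro i hi
    obtain ⟨n, _, hn⟩ := (htr hi).exists_pow_eq'
    rw [← hn]
    exact hpow n x₀ hx₀
  have hf01 : ∀ i, 0 ≤ f i ∧ f i ≤ 1 := by
    intro i
    refine ⟨hw.1 i (σ i), ?_⟩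
    calc f i ≤ ∑ j, w i j :=
          Finset.single_le_sum (fun j _ => hw.1 i j) (Finset.mem_univ (σ i))
      _ = 1 := hrow i
  refine ⟨s₀, 1 - s₀, (hf01 x₀).1, by linarith [(hf01 x₀).2], by ring, ?_⟩
  funext i j
  have hentry : (s₀ • σ.permMatrix ℝ + (1 - s₀) • τ.permMatrix ℝ) i j =
      s₀ * (if σ i = j then 1 else 0) + (1 - s₀) * (if τ i = j then 1 else 0) := by
    simp only [Matrix.add_apply, Matrix.smul_apply, permMatrix_apply, smul_eq_mul]
  rw [hentry]
  rcases eq_or_ne (σ i) (τ i) with hστ | hστ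
  · rcases eq_or_ne (σ i) j with hj | hj
    · have h1 : w i j = 1 := hj ▸ hrow1 i hστ
      rw [if_pos hj, if_pos (hστ.symm.trans hj), h1]; ring
    · have h0 : w i j = 0 := hsupp i j hj (fun h => hj (hστ.trans h))
      rw [if_neg hj, if_neg (fun h => hj (hστ.trans h)), h0]; ring
  · have hfi : f i = s₀ := hconst i ((hci i).mpr hστ)
    rcases eq_or_ne (σ i) j with hj | hj
    · have h1 : w i j = s₀ := hj ▸ hfi
      rw [if_pos hj, if_neg (fun h : τ i = j => hστ (hj.trans h.symm)), h1]; ring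
    · rcases eq_or_ne (τ i) j with hj2 | hj2
      · have h1 : w i j = 1 - s₀ := by rw [← hj2, hrow2 i hστ, hfi]
        rw [if_neg hj, if_pos hj2, h1]; ring
      · rw [if_neg hj, if_neg hj2, hsupp i j hj hj2]; ring

lemma permMatrix_injective {σ τ : Perm (Fin p)} (h : σ.permMatrix ℝ = τ.permMatrix ℝ) :
    σ = τ := by
  ext i
  have := congrFun (congrFun h i) (σ i)
  rw [permMatrix_apply, permMatrix_apply, if_pos rfl] at this
  by_contra hne
  rw [if_neg (fun hh : τ i = σ i => hne (Fin.val_eq_of_eq hh.symm))] at this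
  norm_num at this

lemma adjacent_of_cycle (σ τ : Perm (Fin p)) (hcyc : IsCycle (τ⁻¹ * σ)) :
    AdjacentVertices (birkhoffPolytope p) (σ.permMatrix ℝ) (τ.permMatrix ℝ) := by
  constructor
  · intro h
    have := permMatrix_injective h
    subst this
    rw [inv_mul_cancel] at hcyc
    exact hcyc.ne_one rfl
  constructor
  · exact fun x hx => birkhoff_convex.segment_subset (permMatrix_mem σ) (permMatrix_mem τ) hx
  · intro a ha b hb x hxseg hxopen
    -- x is supported on the union of the graphs
    have hxz : ∀ i j, σ i ≠ j → τ i ≠ j → x i j = 0 := by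
      intro i j h1 h2
      obtain ⟨u, v, hu, hv, huv, rfl⟩ := hxseg
      simp only [Matrix.add_apply, Matrix.smul_apply, permMatrix_apply, smul_eq_mul,
        if_neg h1, if_neg h2]
      ring
    exact mem_segment_of_support σ τ hcyc a ha
      (fun i j h1 h2 => (zero_prop ha hb hxopen (hxz i j h1 h2)).1)

lemma extremePoint_is_perm {x : Matrix (Fin p) (Fin p) ℝ}
    (hx : x ∈ Set.extremePoints ℝ (birkhoffPolytope p)) :
    ∃ σ : Perm (Fin p), x = σ.permMatrix ℝ := by
  have h1 : birkhoffPolytope p = convexHull ℝ {y | ∃ σ : Perm (Fin p), σ.permMatrix ℝ = y} := by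
    rw [birkhoff_eq, doublyStochastic_eq_convexHull_permMatrix]
  rw [h1] at hx
  obtain ⟨σ, hσ⟩ := extremePoints_convexHull_subset hx
  exact ⟨σ, hσ.symm⟩

section Pair
variable (hp : 4 ≤ p)

lemma exists_nonadjacent (hp : 4 ≤ p) :
    ∃ x y, x ∈ Set.extremePoints ℝ (birkhoffPolytope p) ∧
      y ∈ Set.extremePoints ℝ (birkhoffPolytope p) ∧ x ≠ y ∧
      ¬ AdjacentVertices (birkhoffPolytope p) x y := by
  set a0 : Fin p := ⟨0, by omega⟩
  set a1 : Fin p := ⟨1, by omega⟩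
  set a2 : Fin p := ⟨2, by omega⟩
  set a3 : Fin p := ⟨3, by omega⟩
  have h01 : a0 ≠ a1 := by simp [a0, a1, Fin.ext_iff]
  have h02 : a0 ≠ a2 := by simp [a0, a2, Fin.ext_iff]
  have h03 : a0 ≠ a3 := by simp [a0, a3, Fin.ext_iff]
  have h12 : a1 ≠ a2 := by simp [a1, a2, Fin.ext_iff]
  have h13 : a1 ≠ a3 := by simp [a1, a3, Fin.ext_iff]
  have h23 : a2 ≠ a3 := by simp [a2, a3, Fin.ext_iff]
  set s01 : Perm (Fin p) := Equiv.swap a0 a1 with hs01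
  set s23 : Perm (Fin p) := Equiv.swap a2 a3 with hs23
  set π₀ : Perm (Fin p) := s01 * s23 with hπ₀
  have hπa0 : π₀ a0 = a1 := by
    simp only [hπ₀, Perm.mul_apply]
    rw [Equiv.swap_apply_of_ne_of_ne h02 h03, Equiv.swap_apply_left]
  have hπa2 : π₀ a2 = a3 := by
    simp only [hπ₀, Perm.mul_apply]
    rw [Equiv.swap_apply_left, Equiv.swap_apply_of_ne_of_ne h03.symm h13.symm]
  have hkey : ∀ i : Fin p, (s01 i = i ∧ s23 i = π₀ i) ∨ (s01 i = π₀ i ∧ s23 i = i) := by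
    intro i
    by_cases hi0 : i = a0
    · subst hi0
      right
      exact ⟨by rw [hπa0]; exact Equiv.swap_apply_left _ _,
        Equiv.swap_apply_of_ne_of_ne h02 h03⟩
    · by_cases hi1 : i = a1
      · subst hi1
        right
        refine ⟨?_, Equiv.swap_apply_of_ne_of_ne h12 h13⟩
        have hπ1' : π₀ a1 = a0 := by
          simp only [hπ₀, Perm.mul_apply]
          rw [Equiv.swap_apply_of_ne_of_ne h12 h13, Equiv.swap_apply_right]
        rw [hπ1', Equiv.swap_apply_right]
      · left
        refine ⟨Equiv.swap_apply_of_ne_of_ne hi0 hi1, ?_⟩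
        simp only [hπ₀, Perm.mul_apply]
        by_cases hi2 : i = a2
        · subst hi2
          rw [Equiv.swap_apply_left, Equiv.swap_apply_of_ne_of_ne h03.symm h13.symm]
        · by_cases hi3 : i = a3
          · subst hi3
            rw [Equiv.swap_apply_right, Equiv.swap_apply_of_ne_of_ne h02.symm h12.symm]
          · rw [Equiv.swap_apply_of_ne_of_ne hi2 hi3,
              Equiv.swap_apply_of_ne_of_ne hi0 hi1]
  have hmat : (1 : Perm (Fin p)).permMatrix ℝ + π₀.permMatrix ℝ
      = s01.permMatrix ℝ + s23.permMatrix ℝ := by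
    funext i j
    simp only [Matrix.add_apply, permMatrix_apply, Perm.one_apply]
    rcases hkey i with ⟨h1, h2⟩ | ⟨h1, h2⟩
    · rw [h1, h2]; exact congrArg (· + _) (if_congr Iff.rfl rfl rfl)
    · rw [h1, h2, add_comm]; exact congrArg (_ + ·) (if_congr Iff.rfl rfl rfl)
  have hπ1 : π₀ ≠ 1 := by
    intro h
    have := congrArg (fun f : Perm (Fin p) => f a0) h
    simp only [Perm.one_apply] at this
    rw [hπa0] at this
    exact h01 this.symm
  refine ⟨(1 : Perm (Fin p)).permMatrix ℝ, π₀.permMatrix ℝ,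
    permMatrix_extremePoint 1, permMatrix_extremePoint π₀, ?_, ?_⟩
  · intro h
    exact hπ1 (permMatrix_injective h).symm
  · rintro ⟨-, -, hE⟩
    set x := (1 : Perm (Fin p)).permMatrix ℝ
    set y := π₀.permMatrix ℝ
    set z := (1/2 : ℝ) • x + (1/2 : ℝ) • y with hz
    have hzseg : z ∈ segment ℝ x y := ⟨1/2, 1/2, by norm_num, by norm_num, by norm_num, rfl⟩
    have hzopen : z ∈ openSegment ℝ (s01.permMatrix ℝ) (s23.permMatrix ℝ) := by
      refine ⟨1/2, 1/2, by norm_num, by norm_num, by norm_num, ?_⟩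
      rw [hz, ← smul_add, ← smul_add, hmat]
    have := hE (permMatrix_mem s01) (permMatrix_mem s23) hzseg hzopen
    obtain ⟨u, v, hu, hv, huv, heq⟩ := this
    -- evaluate the segment equation at entries (a2, a2) and (a0, a1)
    have hx22 : x a2 a2 = 1 := by
      show (1 : Perm (Fin p)).permMatrix ℝ a2 a2 = 1
      rw [permMatrix_apply, Perm.one_apply, if_pos rfl]
    have hy22 : y a2 a2 = 0 := by
      show π₀.permMatrix ℝ a2 a2 = 0
      rw [permMatrix_apply, if_neg]
      rw [hπa2]
      exact fun h => h23 h.symm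
    have hs22 : s01.permMatrix ℝ a2 a2 = 1 := by
      rw [permMatrix_apply, if_pos (Equiv.swap_apply_of_ne_of_ne h02.symm h12.symm)]
    have hx01 : x a0 a1 = 0 := by
      show (1 : Perm (Fin p)).permMatrix ℝ a0 a1 = 0
      rw [permMatrix_apply, Perm.one_apply, if_neg h01]
    have hy01 : y a0 a1 = 1 := by
      show π₀.permMatrix ℝ a0 a1 = 1
      rw [permMatrix_apply, if_pos hπa0]
    have hs01e : s01.permMatrix ℝ a0 a1 = 1 := by
      rw [permMatrix_apply, if_pos (Equiv.swap_apply_left a0 a1)]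
    have e22 := congrFun (congrFun heq a2) a2
    have e01 := congrFun (congrFun heq a0) a1
    rw [Matrix.add_apply, Matrix.smul_apply, Matrix.smul_apply, smul_eq_mul, smul_eq_mul,
      hx22, hy22, hs22] at e22
    rw [Matrix.add_apply, Matrix.smul_apply, Matrix.smul_apply, smul_eq_mul, smul_eq_mul,
      hx01, hy01, hs01e] at e01
    linarith

end Pair

end Geometry

/-- For `p ≥ 4`, the diameter of the graph of the Birkhoff polytope `B_p` is exactly `2`:
some pair of vertices is non-adjacent, and any two distinct vertices are adjacent or
have a common neighbor. -/
theorem birkhoffPolytope_diameter_two (p : ℕ) (hp : 4 ≤ p) :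
    (∃ x y, x ∈ Set.extremePoints ℝ (birkhoffPolytope p) ∧
      y ∈ Set.extremePoints ℝ (birkhoffPolytope p) ∧ x ≠ y ∧
      ¬ AdjacentVertices (birkhoffPolytope p) x y) ∧
    (∀ x y, x ∈ Set.extremePoints ℝ (birkhoffPolytope p) →
      y ∈ Set.extremePoints ℝ (birkhoffPolytope p) → x ≠ y →
      AdjacentVertices (birkhoffPolytope p) x y ∨
      ∃ z, z ∈ Set.extremePoints ℝ (birkhoffPolytope p) ∧
        AdjacentVertices (birkhoffPolytope p) x z ∧
        AdjacentVertices (birkhoffPolytope p) z y) := by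
  constructor
  · exact exists_nonadjacent hp
  · intro x y hx hy hxy
    obtain ⟨σ, rfl⟩ := extremePoint_is_perm hx
    obtain ⟨τ, rfl⟩ := extremePoint_is_perm hy
    have hστ : σ ≠ τ := fun h => hxy (h ▸ rfl)
    by_cases hc : Equiv.Perm.IsCycle (τ⁻¹ * σ)
    · left
      exact adjacent_of_cycle σ τ hc
    · right
      have hne1 : τ⁻¹ * σ ≠ 1 := fun h => hστ (inv_mul_eq_one.mp h).symm
      obtain ⟨γ, β, hγ, hβ, hγβ⟩ := exists_two_cycles (τ⁻¹ * σ) hne1 hc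
      refine ⟨(τ * γ).permMatrix ℝ, permMatrix_extremePoint _, ?_, ?_⟩
      · refine adjacent_of_cycle σ (τ * γ) ?_
        have h1 : (τ * γ)⁻¹ * σ = β := by
          rw [mul_inv_rev, mul_assoc, ← hγβ, inv_mul_cancel_left]
        rw [h1]
        exact hβ
      · refine adjacent_of_cycle (τ * γ) τ ?_
        rw [inv_mul_cancel_left]
        exact hγ
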